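/- Let G be a simple graph on vertex set [n] with edge set E, and define the 2ⁿ×2ⁿ complex matrices A₁ = Σ_{j=1}^{n} i·X_j, A₂ = Σ_{j=1}^{n} i·Y_j, and A₃ = Σ_{(j,k)∈E} i·Z_jZ_k. Then there exist nonzero real numbers c₁, c₂, c₃ such that [A₁, [A₁, [A₁, A₃]]] = c₁·[A₁, A₃], [A₂, [A₂, [A₂, A₃]]] = c₂·[A₂, A₃], and [A₂, [A₂, [A₁, A₂]]] = c₃·[A₁, A₂]; hence the generating set 𝓢_G = {A₁, A₂, A₃} is cyclic with common cycle length 2. -/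

import Mathlib

open scoped Matrix

/-- The Pauli matrix `X`. -/
noncomputable def pauliX : Matrix (Fin 2) (Fin 2) ℂ := !![0, 1; 1, 0]

/-- The Pauli matrix `Y`. -/
noncomputable def pauliY : Matrix (Fin 2) (Fin 2) ℂ := !![0, -Complex.I; Complex.I, 0]

/-- The Pauli matrix `Z`. -/
noncomputable def pauliZ : Matrix (Fin 2) (Fin 2) ℂ := !![1, 0; 0, -1]

/-- The `n`-qubit operator (a `2ⁿ×2ⁿ` matrix, indexed by `Fin n → Fin 2`) given as the
`n`-fold Kronecker product of the single-qubit operators `P 0, …, P (n-1)`. -/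
noncomputable def nFoldKron {n : ℕ} (P : Fin n → Matrix (Fin 2) (Fin 2) ℂ) :
    Matrix (Fin n → Fin 2) (Fin n → Fin 2) ℂ :=
  Matrix.of fun f g => ∏ i, P i (f i) (g i)

/-- `X_j`: Pauli `X` on the `j`-th factor, identity elsewhere. -/
noncomputable def qubitX (n : ℕ) (j : Fin n) :
    Matrix (Fin n → Fin 2) (Fin n → Fin 2) ℂ :=
  nFoldKron fun i => if i = j then pauliX else 1

/-- `Y_j`: Pauli `Y` on the `j`-th factor, identity elsewhere. -/
noncomputable def qubitY (n : ℕ) (j : Fin n) :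
    Matrix (Fin n → Fin 2) (Fin n → Fin 2) ℂ :=
  nFoldKron fun i => if i = j then pauliY else 1

/-- `Z_jZ_k`: Pauli `Z` on the `j`-th and `k`-th factors, identity elsewhere. -/
noncomputable def qubitZZ (n : ℕ) (j k : Fin n) :
    Matrix (Fin n → Fin 2) (Fin n → Fin 2) ℂ :=
  nFoldKron fun i => if i = j ∨ i = k then pauliZ else 1

/-- `A₁ = Σ_j i·X_j`. -/
noncomputable def opA1 (n : ℕ) : Matrix (Fin n → Fin 2) (Fin n → Fin 2) ℂ :=
  ∑ j, Complex.I • qubitX n j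

/-- `A₂ = Σ_j i·Y_j`. -/
noncomputable def opA2 (n : ℕ) : Matrix (Fin n → Fin 2) (Fin n → Fin 2) ℂ :=
  ∑ j, Complex.I • qubitY n j

/-- `A₃ = Σ_{(j,k)∈E} i·Z_jZ_k`, each edge of `G` counted once. -/
noncomputable def opA3 (n : ℕ) (G : SimpleGraph (Fin n)) [DecidableRel G.Adj] :
    Matrix (Fin n → Fin 2) (Fin n → Fin 2) ℂ :=
  ∑ p ∈ Finset.univ.filter (fun p : Fin n × Fin n => G.Adj p.1 p.2 ∧ p.1 < p.2),
    Complex.I • qubitZZ n p.1 p.2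

lemma nFoldKron_one {n : ℕ} : nFoldKron (1 : Fin n → Matrix (Fin 2) (Fin 2) ℂ) = 1 := by
  ext f g
  simp only [nFoldKron, Matrix.of_apply, Pi.one_apply, Matrix.one_apply]
  by_cases h : f = g
  · subst h; simp
  · rw [if_neg h]
    obtain ⟨i, hi⟩ := Function.ne_iff.mp h
    exact Finset.prod_eq_zero (Finset.mem_univ i) (by simp [hi])

lemma nFoldKron_mul {n : ℕ} (P Q : Fin n → Matrix (Fin 2) (Fin 2) ℂ) :
    nFoldKron P * nFoldKron Q = nFoldKron (fun i => P i * Q i) := by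
  ext f g
  simp only [nFoldKron, Matrix.mul_apply, Matrix.of_apply]
  rw [Fintype.prod_sum]
  exact Finset.sum_congr rfl fun x _ => (Finset.prod_mul_distrib).symm

/-- single-site operator -/
noncomputable def sOp {n : ℕ} (j : Fin n) (M : Matrix (Fin 2) (Fin 2) ℂ) :
    Matrix (Fin n → Fin 2) (Fin n → Fin 2) ℂ :=
  nFoldKron (Pi.mulSingle j M)

lemma sOp_mul {n : ℕ} (j : Fin n) (M N : Matrix (Fin 2) (Fin 2) ℂ) :
    sOp j M * sOp j N = sOp j (M * N) := by
  rw [sOp, sOp, nFoldKron_mul]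
  have hfun : (fun i => Pi.mulSingle j M i * Pi.mulSingle j N i) = Pi.mulSingle j (M * N) := by
    funext i
    rcases eq_or_ne i j with h|h
    · subst h; simp
    · simp [Pi.mulSingle_apply, h]
  rw [hfun, sOp]

lemma sOp_commute {n : ℕ} {j k : Fin n} (h : j ≠ k) (M N : Matrix (Fin 2) (Fin 2) ℂ) :
    Commute (sOp j M) (sOp k N) := by
  have := Pi.mulSingle_commute (f := fun _ : Fin n => Matrix (Fin 2) (Fin 2) ℂ) h M N
  unfold Commute SemiconjBy at this ⊢
  rw [sOp, sOp, nFoldKron_mul, nFoldKron_mul]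
  have hfun : ((fun i => Pi.mulSingle j M i * Pi.mulSingle k N i : Fin n → Matrix (Fin 2) (Fin 2) ℂ))
      = (fun i => Pi.mulSingle k N i * Pi.mulSingle j M i) := by
    funext i
    exact congrFun this i
  rw [hfun]

lemma sOp_smul {n : ℕ} (j : Fin n) (c : ℂ) (M : Matrix (Fin 2) (Fin 2) ℂ) :
    sOp j (c • M) = c • sOp j M := by
  ext f g
  simp only [sOp, nFoldKron, Matrix.of_apply, Matrix.smul_apply, smul_eq_mul]
  rw [← Finset.mul_prod_erase _ _ (Finset.mem_univ j),
      ← Finset.mul_prod_erase _ _ (Finset.mem_univ j)]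
  have : ∀ i ∈ Finset.univ.erase j, (Pi.mulSingle j (c • M) : ∀ _ : Fin n, Matrix (Fin 2) (Fin 2) ℂ) i (f i) (g i) = (Pi.mulSingle j M : ∀ _ : Fin n, Matrix (Fin 2) (Fin 2) ℂ) i (f i) (g i) := by
    intro i hi
    rw [Pi.mulSingle_apply, Pi.mulSingle_apply, if_neg (Finset.mem_erase.mp hi).1,
        if_neg (Finset.mem_erase.mp hi).1]
  rw [Finset.prod_congr rfl this, Pi.mulSingle_apply, Pi.mulSingle_apply, if_pos rfl, if_pos rfl]
  simp [mul_assoc]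

lemma sOp_one {n : ℕ} (j : Fin n) : sOp j (1 : Matrix (Fin 2) (Fin 2) ℂ) = 1 := by
  rw [sOp, Pi.mulSingle_one, nFoldKron_one]

section Pauli
open Complex

lemma pXX : pauliX * pauliX = 1 := by
  ext i j; fin_cases i <;> fin_cases j <;>
    simp [pauliX, Matrix.mul_apply, Fin.sum_univ_two, Matrix.one_apply]

lemma pYY : pauliY * pauliY = 1 := by
  ext i j; fin_cases i <;> fin_cases j <;>
    simp [pauliY, Matrix.mul_apply, Fin.sum_univ_two, Matrix.one_apply]

lemma pZZ : pauliZ * pauliZ = 1 := by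
  ext i j; fin_cases i <;> fin_cases j <;>
    simp [pauliZ, Matrix.mul_apply, Fin.sum_univ_two, Matrix.one_apply]

lemma pXY : pauliX * pauliY = Complex.I • pauliZ := by
  ext i j; fin_cases i <;> fin_cases j <;>
    simp [pauliX, pauliY, pauliZ, Matrix.mul_apply, Fin.sum_univ_two]

lemma pYX : pauliY * pauliX = (-Complex.I) • pauliZ := by
  ext i j; fin_cases i <;> fin_cases j <;>
    simp [pauliX, pauliY, pauliZ, Matrix.mul_apply, Fin.sum_univ_two]

lemma pYZ : pauliY * pauliZ = Complex.I • pauliX := by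
  ext i j; fin_cases i <;> fin_cases j <;>
    simp [pauliX, pauliY, pauliZ, Matrix.mul_apply, Fin.sum_univ_two]

lemma pZY : pauliZ * pauliY = (-Complex.I) • pauliX := by
  ext i j; fin_cases i <;> fin_cases j <;>
    simp [pauliX, pauliY, pauliZ, Matrix.mul_apply, Fin.sum_univ_two]

lemma pZX : pauliZ * pauliX = Complex.I • pauliY := by
  ext i j; fin_cases i <;> fin_cases j <;>
    simp [pauliX, pauliY, pauliZ, Matrix.mul_apply, Fin.sum_univ_two]

lemma pXZ : pauliX * pauliZ = (-Complex.I) • pauliY := by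
  ext i j; fin_cases i <;> fin_cases j <;>
    simp [pauliX, pauliY, pauliZ, Matrix.mul_apply, Fin.sum_univ_two]

end Pauli

section Site
variable {n : ℕ}

lemma lie_sOp (j : Fin n) (P Q : Matrix (Fin 2) (Fin 2) ℂ) :
    ⁅sOp j P, sOp j Q⁆ = sOp j (P * Q) - sOp j (Q * P) := by
  rw [Ring.lie_def, sOp_mul, sOp_mul]

lemma lieXZ (j : Fin n) : ⁅sOp j pauliX, sOp j pauliZ⁆ = (-(2*Complex.I)) • sOp j pauliY := by
  rw [lie_sOp, pXZ, pZX, sOp_smul, sOp_smul]; module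

lemma lieXY (j : Fin n) : ⁅sOp j pauliX, sOp j pauliY⁆ = ((2*Complex.I)) • sOp j pauliZ := by
  rw [lie_sOp, pXY, pYX, sOp_smul, sOp_smul]; module

lemma lieYZ (j : Fin n) : ⁅sOp j pauliY, sOp j pauliZ⁆ = ((2*Complex.I)) • sOp j pauliX := by
  rw [lie_sOp, pYZ, pZY, sOp_smul, sOp_smul]; module

lemma lieYX (j : Fin n) : ⁅sOp j pauliY, sOp j pauliX⁆ = (-(2*Complex.I)) • sOp j pauliZ := by
  rw [lie_sOp, pYX, pXY, sOp_smul, sOp_smul]; module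

end Site

section Reps
variable {n : ℕ}

lemma qubitX_eq (j : Fin n) : qubitX n j = sOp j pauliX := by
  unfold qubitX sOp
  have hfun : ((fun i => if i = j then pauliX else 1) : Fin n → Matrix (Fin 2) (Fin 2) ℂ)
      = Pi.mulSingle j pauliX := by
    funext i; rw [Pi.mulSingle_apply]
  rw [hfun]

lemma qubitY_eq (j : Fin n) : qubitY n j = sOp j pauliY := by
  unfold qubitY sOp
  have hfun : ((fun i => if i = j then pauliY else 1) : Fin n → Matrix (Fin 2) (Fin 2) ℂ)
      = Pi.mulSingle j pauliY := by
    funext i; rw [Pi.mulSingle_apply]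
  rw [hfun]

lemma qubitZZ_eq {j k : Fin n} (h : j ≠ k) :
    qubitZZ n j k = sOp j pauliZ * sOp k pauliZ := by
  unfold qubitZZ sOp
  rw [nFoldKron_mul]
  have hfun : ((fun i => if i = j ∨ i = k then pauliZ else 1) : Fin n → Matrix (Fin 2) (Fin 2) ℂ)
      = fun i => Pi.mulSingle j pauliZ i * Pi.mulSingle k pauliZ i := by
    funext i
    rcases eq_or_ne i j with hj|hj
    · subst hj; simp [Pi.mulSingle_apply, h]
    · rcases eq_or_ne i k with hk|hk
      · subst hk; simp [Pi.mulSingle_apply, Ne.symm h, hj]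
      · simp [Pi.mulSingle_apply, hj, hk]
  rw [hfun]

lemma opA1_eq : opA1 n = ∑ j, Complex.I • sOp j pauliX := by
  unfold opA1; simp [qubitX_eq]

lemma opA2_eq : opA2 n = ∑ j, Complex.I • sOp j pauliY := by
  unfold opA2; simp [qubitY_eq]

lemma opA3_eq (G : SimpleGraph (Fin n)) [DecidableRel G.Adj] :
    opA3 n G = ∑ p ∈ Finset.univ.filter (fun p : Fin n × Fin n => G.Adj p.1 p.2 ∧ p.1 < p.2),
      Complex.I • (sOp p.1 pauliZ * sOp p.2 pauliZ) := by
  unfold opA3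
  refine Finset.sum_congr rfl fun p hp => ?_
  rw [qubitZZ_eq (ne_of_lt (Finset.mem_filter.mp hp).2.2)]

end Reps

section LieUtil
variable {R : Type*} [Ring R] {ι : Type*}

lemma lie_sum' (x : R) (s : Finset ι) (f : ι → R) :
    ⁅x, ∑ i ∈ s, f i⁆ = ∑ i ∈ s, ⁅x, f i⁆ := by
  simp only [Ring.lie_def, Finset.mul_sum, Finset.sum_mul, ← Finset.sum_sub_distrib]

lemma sum_lie' (x : R) (s : Finset ι) (f : ι → R) :
    ⁅∑ i ∈ s, f i, x⁆ = ∑ i ∈ s, ⁅f i, x⁆ := by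
  simp only [Ring.lie_def, Finset.mul_sum, Finset.sum_mul, ← Finset.sum_sub_distrib]

lemma lie_smul' {S : Type*} [CommSemiring S] [Algebra S R] (c : S) (x y : R) :
    ⁅x, c • y⁆ = c • ⁅x, y⁆ := by
  simp only [Ring.lie_def, mul_smul_comm, smul_mul_assoc, smul_sub]

lemma smul_lie' {S : Type*} [CommSemiring S] [Algebra S R] (c : S) (x y : R) :
    ⁅c • x, y⁆ = c • ⁅x, y⁆ := by
  simp only [Ring.lie_def, mul_smul_comm, smul_mul_assoc, smul_sub]

lemma lie_mul_right {x a b : R} (h : Commute x b) : ⁅x, a * b⁆ = ⁅x, a⁆ * b := by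
  simp only [Ring.lie_def, sub_mul, mul_assoc]
  rw [← h.eq, ← mul_assoc, ← mul_assoc]

lemma lie_mul_left {x a b : R} (h : Commute x a) : ⁅x, a * b⁆ = a * ⁅x, b⁆ := by
  simp only [Ring.lie_def, mul_sub, ← mul_assoc]
  rw [h.eq]

end LieUtil

section PairLemmas
variable {n : ℕ}

lemma lie_opA1_single (a : Fin n) (M : Matrix (Fin 2) (Fin 2) ℂ) :
    ⁅opA1 n, sOp a M⁆ = Complex.I • ⁅sOp a pauliX, sOp a M⁆ := by
  rw [opA1_eq, sum_lie']
  rw [Finset.sum_eq_single a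
    (fun j _ hj => by rw [smul_lie', (sOp_commute hj _ _).lie_eq, smul_zero])
    (fun h => absurd (Finset.mem_univ a) h)]
  rw [smul_lie']

lemma lie_opA2_single (a : Fin n) (M : Matrix (Fin 2) (Fin 2) ℂ) :
    ⁅opA2 n, sOp a M⁆ = Complex.I • ⁅sOp a pauliY, sOp a M⁆ := by
  rw [opA2_eq, sum_lie']
  rw [Finset.sum_eq_single a
    (fun j _ hj => by rw [smul_lie', (sOp_commute hj _ _).lie_eq, smul_zero])
    (fun h => absurd (Finset.mem_univ a) h)]
  rw [smul_lie']

lemma lie_opA1_pair {a b : Fin n} (hab : a ≠ b) (M N : Matrix (Fin 2) (Fin 2) ℂ) :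
    ⁅opA1 n, sOp a M * sOp b N⁆
      = Complex.I • (⁅sOp a pauliX, sOp a M⁆ * sOp b N)
        + Complex.I • (sOp a M * ⁅sOp b pauliX, sOp b N⁆) := by
  rw [opA1_eq, sum_lie']
  rw [show (Finset.univ : Finset (Fin n)) = insert a (insert b (Finset.univ \ {a, b})) from ?_]
  · rw [Finset.sum_insert ?ha, Finset.sum_insert ?hb]
    · rw [Finset.sum_eq_zero ?hz]
      · rw [add_zero, smul_lie', smul_lie',
          lie_mul_right (sOp_commute hab pauliX N),
          lie_mul_left (sOp_commute (Ne.symm hab) pauliX M)]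
      case hz =>
        intro j hj
        simp only [Finset.mem_sdiff, Finset.mem_insert, Finset.mem_singleton] at hj
        push_neg at hj
        rw [smul_lie',
          (((sOp_commute hj.2.1 pauliX M)).mul_right (sOp_commute hj.2.2 pauliX N)).lie_eq,
          smul_zero]
    case ha =>
      simp [hab]
    case hb =>
      simp
  · ext j
    simp only [Finset.mem_univ, Finset.mem_insert, Finset.mem_sdiff, Finset.mem_singleton,
      true_iff, true_and]
    tauto

lemma lie_opA2_pair {a b : Fin n} (hab : a ≠ b) (M N : Matrix (Fin 2) (Fin 2) ℂ) :
    ⁅opA2 n, sOp a M * sOp b N⁆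
      = Complex.I • (⁅sOp a pauliY, sOp a M⁆ * sOp b N)
        + Complex.I • (sOp a M * ⁅sOp b pauliY, sOp b N⁆) := by
  rw [opA2_eq, sum_lie']
  rw [show (Finset.univ : Finset (Fin n)) = insert a (insert b (Finset.univ \ {a, b})) from ?_]
  · rw [Finset.sum_insert ?ha, Finset.sum_insert ?hb]
    · rw [Finset.sum_eq_zero ?hz]
      · rw [add_zero, smul_lie', smul_lie',
          lie_mul_right (sOp_commute hab pauliY N),
          lie_mul_left (sOp_commute (Ne.symm hab) pauliY M)]
      case hz =>
        intro j hj
        simp only [Finset.mem_sdiff, Finset.mem_insert, Finset.mem_singleton] at hj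
        push_neg at hj
        rw [smul_lie',
          (((sOp_commute hj.2.1 pauliY M)).mul_right (sOp_commute hj.2.2 pauliY N)).lie_eq,
          smul_zero]
    case ha =>
      simp [hab]
    case hb =>
      simp
  · ext j
    simp only [Finset.mem_univ, Finset.mem_insert, Finset.mem_sdiff, Finset.mem_singleton,
      true_iff, true_and]
    tauto

end PairLemmas

section EdgeLemmas
variable {n : ℕ}
attribute [local instance 100] LieRing.ofAssociativeRing

lemma E1 {a b : Fin n} (hab : a ≠ b) :
    ⁅opA1 n, sOp a pauliZ * sOp b pauliZ⁆
      = (2:ℂ) • (sOp a pauliY * sOp b pauliZ) + (2:ℂ) • (sOp a pauliZ * sOp b pauliY) := by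
  rw [lie_opA1_pair hab, lieXZ, lieXZ]
  simp only [smul_mul_assoc, mul_smul_comm]
  match_scalars <;> (ring_nf; simp [Complex.I_sq])

lemma E2a {a b : Fin n} (hab : a ≠ b) :
    ⁅opA1 n, sOp a pauliY * sOp b pauliZ⁆
      = (-2:ℂ) • (sOp a pauliZ * sOp b pauliZ) + (2:ℂ) • (sOp a pauliY * sOp b pauliY) := by
  rw [lie_opA1_pair hab, lieXY, lieXZ]
  simp only [smul_mul_assoc, mul_smul_comm]
  match_scalars <;> (ring_nf; simp [Complex.I_sq])

lemma E2b {a b : Fin n} (hab : a ≠ b) :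
    ⁅opA1 n, sOp a pauliZ * sOp b pauliY⁆
      = (2:ℂ) • (sOp a pauliY * sOp b pauliY) + (-2:ℂ) • (sOp a pauliZ * sOp b pauliZ) := by
  rw [lie_opA1_pair hab, lieXZ, lieXY]
  simp only [smul_mul_assoc, mul_smul_comm]
  match_scalars <;> (ring_nf; simp [Complex.I_sq])

lemma E3 {a b : Fin n} (hab : a ≠ b) :
    ⁅opA1 n, sOp a pauliY * sOp b pauliY⁆
      = (-2:ℂ) • (sOp a pauliZ * sOp b pauliY) + (-2:ℂ) • (sOp a pauliY * sOp b pauliZ) := by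
  rw [lie_opA1_pair hab, lieXY, lieXY]
  simp only [smul_mul_assoc, mul_smul_comm]
  match_scalars <;> (ring_nf; simp [Complex.I_sq])

lemma edge1 {a b : Fin n} (hab : a ≠ b) :
    ⁅opA1 n, ⁅opA1 n, ⁅opA1 n, Complex.I • (sOp a pauliZ * sOp b pauliZ)⁆⁆⁆
      = (-16:ℂ) • ⁅opA1 n, Complex.I • (sOp a pauliZ * sOp b pauliZ)⁆ := by
  simp only [lie_smul', E1 hab, lie_add, E2a hab, E2b hab, E3 hab, smul_add, smul_smul]
  module

lemma F1 {a b : Fin n} (hab : a ≠ b) :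
    ⁅opA2 n, sOp a pauliZ * sOp b pauliZ⁆
      = (-2:ℂ) • (sOp a pauliX * sOp b pauliZ) + (-2:ℂ) • (sOp a pauliZ * sOp b pauliX) := by
  rw [lie_opA2_pair hab, lieYZ, lieYZ]
  simp only [smul_mul_assoc, mul_smul_comm]
  match_scalars <;> (ring_nf; simp [Complex.I_sq])

lemma F2a {a b : Fin n} (hab : a ≠ b) :
    ⁅opA2 n, sOp a pauliX * sOp b pauliZ⁆
      = (2:ℂ) • (sOp a pauliZ * sOp b pauliZ) + (-2:ℂ) • (sOp a pauliX * sOp b pauliX) := by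
  rw [lie_opA2_pair hab, lieYX, lieYZ]
  simp only [smul_mul_assoc, mul_smul_comm]
  match_scalars <;> (ring_nf; simp [Complex.I_sq])

lemma F2b {a b : Fin n} (hab : a ≠ b) :
    ⁅opA2 n, sOp a pauliZ * sOp b pauliX⁆
      = (-2:ℂ) • (sOp a pauliX * sOp b pauliX) + (2:ℂ) • (sOp a pauliZ * sOp b pauliZ) := by
  rw [lie_opA2_pair hab, lieYZ, lieYX]
  simp only [smul_mul_assoc, mul_smul_comm]
  match_scalars <;> (ring_nf; simp [Complex.I_sq])

lemma F3 {a b : Fin n} (hab : a ≠ b) :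
    ⁅opA2 n, sOp a pauliX * sOp b pauliX⁆
      = (2:ℂ) • (sOp a pauliZ * sOp b pauliX) + (2:ℂ) • (sOp a pauliX * sOp b pauliZ) := by
  rw [lie_opA2_pair hab, lieYX, lieYX]
  simp only [smul_mul_assoc, mul_smul_comm]
  match_scalars <;> (ring_nf; simp [Complex.I_sq])

lemma edge2 {a b : Fin n} (hab : a ≠ b) :
    ⁅opA2 n, ⁅opA2 n, ⁅opA2 n, Complex.I • (sOp a pauliZ * sOp b pauliZ)⁆⁆⁆
      = (-16:ℂ) • ⁅opA2 n, Complex.I • (sOp a pauliZ * sOp b pauliZ)⁆ := by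
  simp only [lie_smul', F1 hab, lie_add, F2a hab, F2b hab, F3 hab, smul_add, smul_smul]
  module

end EdgeLemmas

section Main
variable {n : ℕ}

lemma main1 (G : SimpleGraph (Fin n)) [DecidableRel G.Adj] :
    ⁅opA1 n, ⁅opA1 n, ⁅opA1 n, opA3 n G⁆⁆⁆ = (-16:ℂ) • ⁅opA1 n, opA3 n G⁆ := by
  rw [opA3_eq]
  simp only [lie_sum', Finset.smul_sum]
  refine Finset.sum_congr rfl fun p hp => ?_
  exact edge1 (ne_of_lt (Finset.mem_filter.mp hp).2.2)

lemma main2 (G : SimpleGraph (Fin n)) [DecidableRel G.Adj] :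
    ⁅opA2 n, ⁅opA2 n, ⁅opA2 n, opA3 n G⁆⁆⁆ = (-16:ℂ) • ⁅opA2 n, opA3 n G⁆ := by
  rw [opA3_eq]
  simp only [lie_sum', Finset.smul_sum]
  refine Finset.sum_congr rfl fun p hp => ?_
  exact edge2 (ne_of_lt (Finset.mem_filter.mp hp).2.2)

lemma S1 (j : Fin n) : ⁅opA1 n, sOp j pauliY⁆ = (-2:ℂ) • sOp j pauliZ := by
  rw [lie_opA1_single, lieXY, smul_smul]
  match_scalars <;> (ring_nf; simp [Complex.I_sq])

lemma S2 (j : Fin n) : ⁅opA2 n, sOp j pauliZ⁆ = (-2:ℂ) • sOp j pauliX := by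
  rw [lie_opA2_single, lieYZ, smul_smul]
  match_scalars <;> (ring_nf; simp [Complex.I_sq])

lemma S3 (j : Fin n) : ⁅opA2 n, sOp j pauliX⁆ = (2:ℂ) • sOp j pauliZ := by
  rw [lie_opA2_single, lieYX, smul_smul]
  match_scalars <;> (ring_nf; simp [Complex.I_sq])

lemma h12 : ⁅opA1 n, opA2 n⁆ = ∑ j, (-2*Complex.I) • sOp j pauliZ := by
  rw [opA2_eq]
  simp only [lie_sum', lie_smul', S1, smul_smul]
  refine Finset.sum_congr rfl fun j _ => ?_
  module

lemma main3 : ⁅opA2 n, ⁅opA2 n, ⁅opA1 n, opA2 n⁆⁆⁆ = (-4:ℂ) • ⁅opA1 n, opA2 n⁆ := by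
  rw [h12]
  simp only [lie_sum', lie_smul', S2, S3, smul_smul, Finset.smul_sum]
  refine Finset.sum_congr rfl fun j _ => ?_
  module

end Main

lemma rsmul {m : Type*} [Fintype m] (r : ℝ) (M : Matrix m m ℂ) : r • M = (r : ℂ) • M := by
  ext i j
  simp [Matrix.smul_apply, Complex.real_smul]

section FlipSec
attribute [local instance 100] LieRing.ofAssociativeRing

lemma flip_lemma {m : Type*} [Fintype m] [DecidableEq m] {k₁ k₂ B C : Matrix m m ℂ} {c : ℝ}
    (h : ⁅k₂, ⁅k₁, ⁅B, C⁆⁆⁆ = c • ⁅B, C⁆) : ⁅k₂, ⁅k₁, ⁅C, B⁆⁆⁆ = c • ⁅C, B⁆ := by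
  rw [← lie_skew C B, lie_neg, lie_neg, h, smul_neg]

end FlipSec


/-- For the generators `A₁ = Σ i·X_j`, `A₂ = Σ i·Y_j`, `A₃ = Σ_{(j,k)∈E} i·Z_jZ_k` of any
simple graph `G`, there are nonzero reals `c₁, c₂, c₃` with
`⁅A₁,⁅A₁,⁅A₁,A₃⁆⁆⁆ = c₁ • ⁅A₁,A₃⁆`, `⁅A₂,⁅A₂,⁅A₂,A₃⁆⁆⁆ = c₂ • ⁅A₂,A₃⁆`, and
`⁅A₂,⁅A₂,⁅A₁,A₂⁆⁆⁆ = c₃ • ⁅A₁,A₂⁆`; hence every noncommuting pair from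
`𝓢_G = {A₁, A₂, A₃}` admits a stable extension of length `2`, i.e. `𝓢_G` is cyclic with
common cycle length `2`. -/
theorem stmt18 (n : ℕ) (G : SimpleGraph (Fin n)) [DecidableRel G.Adj] :
    (∃ c₁ : ℝ, c₁ ≠ 0 ∧
      ⁅opA1 n, ⁅opA1 n, ⁅opA1 n, opA3 n G⁆⁆⁆ = c₁ • ⁅opA1 n, opA3 n G⁆) ∧
    (∃ c₂ : ℝ, c₂ ≠ 0 ∧
      ⁅opA2 n, ⁅opA2 n, ⁅opA2 n, opA3 n G⁆⁆⁆ = c₂ • ⁅opA2 n, opA3 n G⁆) ∧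
    (∃ c₃ : ℝ, c₃ ≠ 0 ∧
      ⁅opA2 n, ⁅opA2 n, ⁅opA1 n, opA2 n⁆⁆⁆ = c₃ • ⁅opA1 n, opA2 n⁆) ∧
    (∀ B ∈ ({opA1 n, opA2 n, opA3 n G} : Set (Matrix (Fin n → Fin 2) (Fin n → Fin 2) ℂ)),
      ∀ C ∈ ({opA1 n, opA2 n, opA3 n G} : Set (Matrix (Fin n → Fin 2) (Fin n → Fin 2) ℂ)),
        ⁅B, C⁆ ≠ 0 →
          ∃ k₁ ∈ ({opA1 n, opA2 n, opA3 n G} :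
              Set (Matrix (Fin n → Fin 2) (Fin n → Fin 2) ℂ)),
            ∃ k₂ ∈ ({opA1 n, opA2 n, opA3 n G} :
                Set (Matrix (Fin n → Fin 2) (Fin n → Fin 2) ℂ)),
              ∃ c : ℝ, c ≠ 0 ∧ ⁅k₂, ⁅k₁, ⁅B, C⁆⁆⁆ = c • ⁅B, C⁆) := by
  have h1 : ⁅opA1 n, ⁅opA1 n, ⁅opA1 n, opA3 n G⁆⁆⁆ = (-16:ℝ) • ⁅opA1 n, opA3 n G⁆ := by
    rw [main1, rsmul]; norm_num
  have h2 : ⁅opA2 n, ⁅opA2 n, ⁅opA2 n, opA3 n G⁆⁆⁆ = (-16:ℝ) • ⁅opA2 n, opA3 n G⁆ := by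
    rw [main2, rsmul]; norm_num
  have h3 : ⁅opA2 n, ⁅opA2 n, ⁅opA1 n, opA2 n⁆⁆⁆ = (-4:ℝ) • ⁅opA1 n, opA2 n⁆ := by
    rw [main3, rsmul]; norm_num
  refine ⟨⟨-16, by norm_num, h1⟩, ⟨-16, by norm_num, h2⟩, ⟨-4, by norm_num, h3⟩, ?_⟩
  intro B hB C hC hBC
  have mem1 : opA1 n ∈ ({opA1 n, opA2 n, opA3 n G} :
      Set (Matrix (Fin n → Fin 2) (Fin n → Fin 2) ℂ)) := by simp
  have mem2 : opA2 n ∈ ({opA1 n, opA2 n, opA3 n G} :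
      Set (Matrix (Fin n → Fin 2) (Fin n → Fin 2) ℂ)) := by simp
  simp only [Set.mem_insert_iff, Set.mem_singleton_iff] at hB hC
  rcases hB with rfl|rfl|rfl <;> rcases hC with rfl|rfl|rfl
  · exact (hBC (by rw [Ring.lie_def, sub_self])).elim
  · exact ⟨_, mem2, _, mem2, -4, by norm_num, h3⟩
  · exact ⟨_, mem1, _, mem1, -16, by norm_num, h1⟩
  · exact ⟨_, mem2, _, mem2, -4, by norm_num, flip_lemma h3⟩
  · exact (hBC (by rw [Ring.lie_def, sub_self])).elim
  · exact ⟨_, mem2, _, mem2, -16, by norm_num, h2⟩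
  · exact ⟨_, mem1, _, mem1, -16, by norm_num, flip_lemma h1⟩
  · exact ⟨_, mem2, _, mem2, -16, by norm_num, flip_lemma h2⟩
  · exact (hBC (by rw [Ring.lie_def, sub_self])).elim
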